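/- arXiv:1110.6853 — 2 statements merged into one kernel-verified Lean document; each statement's English description precedes it below -/
import Mathlib

section
/- The number of δ-paths of length n starting at a fixed point x ∈ ℤ is at most 2^{n(1 + H(δ) + 3δ)}, where H(δ) = −δ log₂ δ − (1−δ) log₂(1−δ) is the binary entropy and 0 < δ < 1/2. -/
open Finset

/-- `R` is a δ-path of length `n`: the set `M` of times with non-unit increments has
cardinality at most `δn` and the total variation of the non-unit increments is at most `δn`. -/
def IsDeltaPath (δ : ℝ) (n : ℕ) (R : ℕ → ℤ) : Prop :=
  ((((Finset.range n).filter (fun t => |R (t+1) - R t| ≠ 1)).card : ℝ) ≤ δ * n) ∧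
  (((∑ t ∈ (Finset.range n).filter (fun t => |R (t+1) - R t| ≠ 1),
      |R (t+1) - R t| : ℤ) : ℝ) ≤ δ * n)

/-- The binary entropy function. -/
noncomputable def binEntropy (p : ℝ) : ℝ :=
  -p * Real.logb 2 p - (1-p) * Real.logb 2 (1-p)

lemma entropy_count (δ : ℝ) (hδ0 : 0 < δ) (hδ : δ < 1/2) (n k : ℕ) (hk : (k : ℝ) ≤ δ * n) :
    (((Finset.univ : Finset (Finset (Fin n))).filter fun M => M.card ≤ k).card : ℝ)
      ≤ (2:ℝ) ^ ((n:ℝ) * binEntropy δ) := by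
  have hq0 : (0:ℝ) < 1 - δ := by linarith
  have hpq : δ ≤ 1 - δ := by linarith
  -- total probability one
  have hsum : ∑ M ∈ (Finset.univ : Finset (Fin n)).powerset,
      δ ^ M.card * (1 - δ) ^ (n - M.card) = 1 := by
    have h := Finset.prod_add (fun _ : Fin n => δ) (fun _ : Fin n => (1 - δ)) Finset.univ
    have h2 : ∀ M ∈ (Finset.univ : Finset (Fin n)).powerset,
        (∏ _i ∈ M, δ) * ∏ _i ∈ Finset.univ \ M, (1-δ)
          = δ ^ M.card * (1 - δ) ^ (n - M.card) := by
      intro M _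
      rw [prod_const, prod_const, card_sdiff_of_subset (subset_univ M), card_univ, Fintype.card_fin]
    rw [Finset.sum_congr rfl h2] at h
    rw [← h]
    simp
  -- pointwise weight bound
  have hw : ∀ M : Finset (Fin n), M.card ≤ k →
      δ ^ (δ * n) * (1 - δ) ^ ((1-δ) * n) ≤ δ ^ M.card * (1 - δ) ^ (n - M.card) := by
    intro M hM
    have hjn : M.card ≤ n := by
      simpa using Finset.card_le_card (Finset.subset_univ M)
    have hj : (M.card : ℝ) ≤ δ * n := le_trans (by exact_mod_cast hM) hk
    have hratio0 : (0:ℝ) < δ / (1 - δ) := by positivity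
    have hratio1 : δ / (1 - δ) ≤ 1 := by
      rw [div_le_one hq0]; exact hpq
    have hrw : δ ^ M.card * (1 - δ) ^ (n - M.card)
        = (δ / (1-δ)) ^ ((M.card : ℝ)) * (1-δ) ^ ((n:ℝ)) := by
      have hsplit : (1-δ)^n = (1-δ)^(n - M.card) * (1-δ)^M.card := by
        rw [← pow_add]; congr 1; omega
      rw [Real.rpow_natCast, Real.rpow_natCast, div_pow, hsplit]
      field_simp
    have hrw2 : δ ^ (δ * n) * (1 - δ) ^ ((1-δ) * n)
        = (δ / (1-δ)) ^ (δ * (n:ℝ)) * (1-δ) ^ ((n:ℝ)) := by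
      rw [Real.div_rpow hδ0.le hq0.le]
      rw [div_mul_eq_mul_div, eq_comm, div_eq_iff (by positivity)]
      rw [mul_assoc, ← Real.rpow_add hq0]
      congr 2
      push_cast
      ring
    rw [hrw, hrw2]
    apply mul_le_mul_of_nonneg_right _ (by positivity)
    exact Real.rpow_le_rpow_of_exponent_ge hratio0 hratio1 hj
  set C := (Finset.univ : Finset (Finset (Fin n))).filter fun M => M.card ≤ k with hC
  have h1 : (C.card : ℝ) * (δ ^ (δ * n) * (1 - δ) ^ ((1-δ) * n)) ≤ 1 := by
    calc (C.card : ℝ) * (δ ^ (δ * n) * (1 - δ) ^ ((1-δ) * n))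
        = ∑ _M ∈ C, δ ^ (δ * n) * (1 - δ) ^ ((1-δ) * n) := by
          rw [Finset.sum_const, nsmul_eq_mul]
      _ ≤ ∑ M ∈ C, δ ^ M.card * (1 - δ) ^ (n - M.card) := by
          apply Finset.sum_le_sum
          intro M hM
          exact hw M (Finset.mem_filter.1 hM).2
      _ ≤ ∑ M ∈ (Finset.univ : Finset (Fin n)).powerset,
            δ ^ M.card * (1 - δ) ^ (n - M.card) := by
          apply Finset.sum_le_sum_of_subset_of_nonneg
          · rw [Finset.powerset_univ]; exact Finset.filter_subset _ _
          · intro M _ _; positivity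
      _ = 1 := hsum
  have hX : (0:ℝ) < δ ^ (δ * n) * (1 - δ) ^ ((1-δ) * n) := by positivity
  have h2 : (2:ℝ) ^ ((n:ℝ) * binEntropy δ)
      = (δ ^ (δ * (n:ℝ)) * (1 - δ) ^ ((1-δ) * n))⁻¹ := by
    have e1 : (2:ℝ) ^ (Real.logb 2 δ * (δ * (n:ℝ))) = δ ^ (δ * (n:ℝ)) := by
      conv_lhs => rw [Real.rpow_mul (by norm_num : (0:ℝ) ≤ 2)]
      rw [Real.rpow_logb (by norm_num) (by norm_num) hδ0]
    have e2 : (2:ℝ) ^ (Real.logb 2 (1-δ) * ((1-δ) * (n:ℝ))) = (1-δ) ^ ((1-δ) * (n:ℝ)) := by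
      conv_lhs => rw [Real.rpow_mul (by norm_num : (0:ℝ) ≤ 2)]
      rw [Real.rpow_logb (by norm_num) (by norm_num) hq0]
    rw [← e1, ← e2, ← Real.rpow_add (by norm_num : (0:ℝ) < 2),
      ← Real.rpow_neg (by norm_num : (0:ℝ) ≤ 2)]
    congr 1
    unfold binEntropy
    ring
  have h3 := mul_le_mul_of_nonneg_right h1 (inv_nonneg.2 hX.le)
  rw [one_mul, mul_assoc, mul_inv_cancel₀ hX.ne', mul_one] at h3
  rw [h2]
  exact h3

/-- increments of a path -/
def Dfun (n : ℕ) (R : Fin (n+1) → ℤ) : Fin n → ℤ := fun t => R t.succ - R t.castSucc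

/-- times with non-unit increments -/
def Mset (n : ℕ) (R : Fin (n+1) → ℤ) : Finset (Fin n) :=
  Finset.univ.filter fun t => ¬ |Dfun n R t| = 1

/-- cumulative encoding of the sizes of non-unit increments -/
def gfun (n : ℕ) (R : Fin (n+1) → ℤ) : Fin n → ℕ := fun t =>
  ((Mset n R).filter (fun s => s ≤ t)).card
    + (∑ s ∈ (Mset n R).filter (fun s => s ≤ t), (Dfun n R s).natAbs) - 1

def Bset (n k : ℕ) (R : Fin (n+1) → ℤ) : Finset (Fin (2*k)) :=
  (((Mset n R).image (gfun n R)).filter (fun v => v < 2*k)).attachFin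
    (fun m hm => (Finset.mem_filter.1 hm).2)

def truncFinset {α : Type*} (k : ℕ) (M : Finset α) : {M : Finset α // M.card ≤ k} :=
  if h : M.card ≤ k then ⟨M, h⟩ else ⟨∅, by simp⟩

/-- full encoding of a path -/
def enc (n k : ℕ) (R : Fin (n+1) → ℤ) :
    (Fin n → Bool) × {M : Finset (Fin n) // M.card ≤ k} × Finset (Fin (2*k)) :=
  (fun t => decide (0 < Dfun n R t), truncFinset k (Mset n R), Bset n k R)

lemma attachFin_image_val {n : ℕ} (s : Finset ℕ) (h : ∀ m ∈ s, m < n) :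
    (s.attachFin h).image Fin.val = s := by
  ext b
  simp only [Finset.mem_image, Finset.mem_attachFin]
  constructor
  · rintro ⟨a, ha, rfl⟩; exact ha
  · intro hb; exact ⟨⟨b, h b hb⟩, hb, rfl⟩

lemma gfun_lt {n k : ℕ} {R : Fin (n+1) → ℤ}
    (hcard : (Mset n R).card ≤ k)
    (hsum : ∑ s ∈ Mset n R, (Dfun n R s).natAbs ≤ k) :
    ∀ t ∈ Mset n R, gfun n R t < 2*k := by
  intro t ht
  have h1 : ((Mset n R).filter (fun s => s ≤ t)).card ≤ k :=
    le_trans (Finset.card_le_card (Finset.filter_subset _ _)) hcard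
  have h2 : ∑ s ∈ (Mset n R).filter (fun s => s ≤ t), (Dfun n R s).natAbs ≤ k :=
    le_trans (Finset.sum_le_sum_of_subset (Finset.filter_subset _ _)) hsum
  have h3 : 1 ≤ ((Mset n R).filter (fun s => s ≤ t)).card :=
    Finset.card_pos.2 ⟨t, Finset.mem_filter.2 ⟨ht, le_refl t⟩⟩
  unfold gfun
  omega

lemma gfun_strictMono {n : ℕ} (R : Fin (n+1) → ℤ) :
    StrictMonoOn (gfun n R) ↑(Mset n R) := by
  intro t ht t' ht' htt'
  simp only [Finset.mem_coe] at ht ht'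
  have hsub : (Mset n R).filter (fun s => s ≤ t) ⊆ (Mset n R).filter (fun s => s ≤ t') := by
    intro s hs
    rw [Finset.mem_filter] at hs ⊢
    exact ⟨hs.1, le_trans hs.2 htt'.le⟩
  have hmem : t' ∈ (Mset n R).filter (fun s => s ≤ t') :=
    Finset.mem_filter.2 ⟨ht', le_refl t'⟩
  have hnmem : t' ∉ (Mset n R).filter (fun s => s ≤ t) := by
    rw [Finset.mem_filter]
    rintro ⟨-, hle⟩
    exact absurd (lt_of_lt_of_le htt' hle) (lt_irrefl t)
  have hcard : ((Mset n R).filter (fun s => s ≤ t)).card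
      < ((Mset n R).filter (fun s => s ≤ t')).card :=
    Finset.card_lt_card ((Finset.ssubset_iff_of_subset hsub).2 ⟨t', hmem, hnmem⟩)
  have hsum : ∑ s ∈ (Mset n R).filter (fun s => s ≤ t), (Dfun n R s).natAbs
      ≤ ∑ s ∈ (Mset n R).filter (fun s => s ≤ t'), (Dfun n R s).natAbs :=
    Finset.sum_le_sum_of_subset hsub
  have h3 : 1 ≤ ((Mset n R).filter (fun s => s ≤ t)).card :=
    Finset.card_pos.2 ⟨t, Finset.mem_filter.2 ⟨ht, le_refl t⟩⟩
  unfold gfun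
  omega

lemma eqOn_of_strictMonoOn_image {n : ℕ} {M : Finset (Fin n)} {f g : Fin n → ℕ}
    (hf : StrictMonoOn f ↑M) (hg : StrictMonoOn g ↑M) (h : M.image f = M.image g) :
    ∀ t ∈ M, f t = g t := by
  have e := M.orderIsoOfFin rfl
  set F : Fin M.card → ℕ := fun i => f (e i) with hF
  set G : Fin M.card → ℕ := fun i => g (e i) with hG
  have hFmono : StrictMono F := fun i j hij =>
    hf (e i).2 (e j).2 (by exact_mod_cast e.strictMono hij)
  have hGmono : StrictMono G := fun i j hij =>
    hg (e i).2 (e j).2 (by exact_mod_cast e.strictMono hij)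
  have hrangeF : Set.range F = ↑(M.image f) := by
    ext y
    simp only [Set.mem_range, coe_image, Set.mem_image, mem_coe, hF]
    constructor
    · rintro ⟨i, rfl⟩; exact ⟨e i, (e i).2, rfl⟩
    · rintro ⟨t, ht, rfl⟩; exact ⟨e.symm ⟨t, ht⟩, by simp⟩
  have hrangeG : Set.range G = ↑(M.image g) := by
    ext y
    simp only [Set.mem_range, coe_image, Set.mem_image, mem_coe, hG]
    constructor
    · rintro ⟨i, rfl⟩; exact ⟨e i, (e i).2, rfl⟩
    · rintro ⟨t, ht, rfl⟩; exact ⟨e.symm ⟨t, ht⟩, by simp⟩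
  have hFG : F = G := by
    haveI : WellFoundedLT (Fin M.card) := inferInstance
    exact (hFmono.range_inj hGmono).1 (by rw [hrangeF, hrangeG, h])
  intro t ht
  have : f ((e (e.symm ⟨t, ht⟩) : {x // x ∈ M}) : Fin n)
      = g ((e (e.symm ⟨t, ht⟩) : {x // x ∈ M}) : Fin n) :=
    congrFun hFG (e.symm ⟨t, ht⟩)
  simpa using this

lemma enc_inj {n k : ℕ} {R R' : Fin (n+1) → ℤ}
    (h0 : R 0 = R' 0)
    (hcard : (Mset n R).card ≤ k) (hsum : ∑ s ∈ Mset n R, (Dfun n R s).natAbs ≤ k)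
    (hcard' : (Mset n R').card ≤ k) (hsum' : ∑ s ∈ Mset n R', (Dfun n R' s).natAbs ≤ k)
    (heq : enc n k R = enc n k R') : R = R' := by
  have hσ : (fun t => decide (0 < Dfun n R t)) = (fun t => decide (0 < Dfun n R' t)) :=
    congrArg Prod.fst heq
  have hM : Mset n R = Mset n R' := by
    have h := congrArg (fun p => (p.2.1 : Finset (Fin n))) heq
    simpa [enc, truncFinset, dif_pos hcard, dif_pos hcard'] using h
  have hB : Bset n k R = Bset n k R' := congrArg (fun p => p.2.2) heq
  have hBv : ((Mset n R).image (gfun n R)).filter (fun v => v < 2*k)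
      = ((Mset n R').image (gfun n R')).filter (fun v => v < 2*k) := by
    have h := congrArg (Finset.image Fin.val) hB
    rwa [Bset, Bset, attachFin_image_val, attachFin_image_val] at h
  have himg : (Mset n R).image (gfun n R) = (Mset n R').image (gfun n R') := by
    rw [Finset.filter_true_of_mem, Finset.filter_true_of_mem] at hBv
    · exact hBv
    · intro v hv
      obtain ⟨t, ht, rfl⟩ := Finset.mem_image.1 hv
      exact gfun_lt hcard' hsum' t ht
    · intro v hv
      obtain ⟨t, ht, rfl⟩ := Finset.mem_image.1 hv
      exact gfun_lt hcard hsum t ht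
  have hmono' : StrictMonoOn (gfun n R') ↑(Mset n R) := by
    rw [hM]; exact gfun_strictMono R'
  rw [← hM] at himg
  have hg : ∀ t ∈ Mset n R, gfun n R t = gfun n R' t :=
    eqOn_of_strictMonoOn_image (gfun_strictMono R) hmono' himg
  have hps : ∀ t ∈ Mset n R,
      ∑ s ∈ (Mset n R).filter (fun s => s ≤ t), (Dfun n R s).natAbs
      = ∑ s ∈ (Mset n R).filter (fun s => s ≤ t), (Dfun n R' s).natAbs := by
    intro t ht
    have h1 := hg t ht
    unfold gfun at h1
    rw [← hM] at h1
    have hc1 : 1 ≤ ((Mset n R).filter (fun s => s ≤ t)).card :=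
      Finset.card_pos.2 ⟨t, Finset.mem_filter.2 ⟨ht, le_refl t⟩⟩
    omega
  have habs : ∀ m : ℕ, ∀ t : Fin n, (t : ℕ) < m → t ∈ Mset n R →
      (Dfun n R t).natAbs = (Dfun n R' t).natAbs := by
    intro m
    induction m with
    | zero => intro t h; omega
    | succ m ih =>
      intro t htm ht
      have hsplit : (Mset n R).filter (fun s => s ≤ t)
          = insert t ((Mset n R).filter (fun s => s < t)) := by
        ext s
        simp only [Finset.mem_filter, Finset.mem_insert]
        constructor
        · rintro ⟨hs, hle⟩
          rcases lt_or_eq_of_le hle with h | h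
          · exact Or.inr ⟨hs, h⟩
          · exact Or.inl h
        · rintro (h | ⟨hs, hlt⟩)
          · rw [h]; exact ⟨ht, le_refl t⟩
          · exact ⟨hs, hlt.le⟩
      have hnot : t ∉ (Mset n R).filter (fun s => s < t) := by
        simp only [Finset.mem_filter]
        rintro ⟨-, hlt⟩
        exact absurd hlt (lt_irrefl t)
      have e1 : ∑ s ∈ (Mset n R).filter (fun s => s ≤ t), (Dfun n R s).natAbs
          = (Dfun n R t).natAbs + ∑ s ∈ (Mset n R).filter (fun s => s < t), (Dfun n R s).natAbs := by
        rw [hsplit, Finset.sum_insert hnot]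
      have e1' : ∑ s ∈ (Mset n R).filter (fun s => s ≤ t), (Dfun n R' s).natAbs
          = (Dfun n R' t).natAbs + ∑ s ∈ (Mset n R).filter (fun s => s < t), (Dfun n R' s).natAbs := by
        rw [hsplit, Finset.sum_insert hnot]
      have e2 : ∑ s ∈ (Mset n R).filter (fun s => s < t), (Dfun n R s).natAbs
          = ∑ s ∈ (Mset n R).filter (fun s => s < t), (Dfun n R' s).natAbs := by
        apply Finset.sum_congr rfl
        intro s hs
        rw [Finset.mem_filter] at hs
        exact ih s (by have := hs.2; omega) hs.1
      have e3 := hps t ht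
      omega
  have hD : ∀ t : Fin n, Dfun n R t = Dfun n R' t := by
    intro t
    have hsend : (0 < Dfun n R t) ↔ (0 < Dfun n R' t) := by
      have h := congrFun hσ t
      simpa [decide_eq_decide] using h
    have habs_t : (Dfun n R t).natAbs = (Dfun n R' t).natAbs := by
      by_cases ht : t ∈ Mset n R
      · exact habs ((t : ℕ) + 1) t (Nat.lt_succ_self _) ht
      · have ht' : t ∉ Mset n R' := hM ▸ ht
        have h1 : |Dfun n R t| = 1 := by
          simpa [Mset] using ht
        have h2 : |Dfun n R' t| = 1 := by
          simpa [Mset] using ht'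
        rw [Int.abs_eq_natAbs] at h1 h2
        omega
    by_cases hpos : 0 < Dfun n R t
    · have := hsend.1 hpos; omega
    · have : ¬ 0 < Dfun n R' t := fun h => hpos (hsend.2 h); omega
  funext i
  induction i using Fin.induction with
  | zero => exact h0
  | succ i ih =>
    have h := hD i
    unfold Dfun at h
    omega

lemma path_facts {n : ℕ} {δ : ℝ} (R : Fin (n+1) → ℤ)
    (h : IsDeltaPath δ n (fun t => R ⟨min t n, Nat.lt_succ_of_le (min_le_right t n)⟩)) :
    ((Mset n R).card : ℝ) ≤ δ * n ∧
      ((∑ s ∈ Mset n R, (Dfun n R s).natAbs : ℕ) : ℝ) ≤ δ * n := by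
  set r : ℕ → ℤ := fun t => R ⟨min t n, Nat.lt_succ_of_le (min_le_right t n)⟩ with hr
  obtain ⟨h1, h2⟩ := h
  have hpt : ∀ (t : ℕ) (htn : t < n), r (t+1) - r t = Dfun n R ⟨t, htn⟩ := by
    intro t htn
    have e1 : (⟨min (t+1) n, Nat.lt_succ_of_le (min_le_right (t+1) n)⟩ : Fin (n+1))
        = (⟨t, htn⟩ : Fin n).succ := by
      apply Fin.ext
      simp only [Fin.val_succ]
      omega
    have e2 : (⟨min t n, Nat.lt_succ_of_le (min_le_right t n)⟩ : Fin (n+1))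
        = (⟨t, htn⟩ : Fin n).castSucc := by
      apply Fin.ext
      simp only [Fin.coe_castSucc]
      omega
    rw [hr]
    simp only []
    rw [e1, e2]
    rfl
  have hset : (Finset.range n).filter (fun t => |r (t+1) - r t| ≠ 1)
      = (Mset n R).image Fin.val := by
    ext t
    simp only [Finset.mem_filter, Finset.mem_range, Finset.mem_image, ne_eq]
    constructor
    · rintro ⟨htn, hP⟩
      refine ⟨⟨t, htn⟩, ?_, rfl⟩
      rw [hpt t htn] at hP
      simpa [Mset] using hP
    · rintro ⟨s, hs, rfl⟩
      refine ⟨s.2, ?_⟩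
      have he := hpt (s : ℕ) s.2
      rw [he]
      simpa [Mset] using hs
  constructor
  · rw [hset, Finset.card_image_of_injective _ Fin.val_injective] at h1
    exact h1
  · rw [hset, Finset.sum_image (fun a _ b _ hab => Fin.val_injective hab)] at h2
    have he : ∑ s ∈ Mset n R, |r ((s : ℕ) + 1) - r (s : ℕ)|
        = ((∑ s ∈ Mset n R, (Dfun n R s).natAbs : ℕ) : ℤ) := by
      push_cast
      apply Finset.sum_congr rfl
      intro s _
      rw [hpt (s : ℕ) s.2, Int.abs_eq_natAbs]
    rw [he] at h2
    exact_mod_cast h2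

/-- The number of δ-paths of length `n` starting at a fixed point `x` is at most
`2^{n(1 + H(δ) + 3δ)}`. -/
theorem stmt7 (δ : ℝ) (hδ0 : 0 < δ) (hδ : δ < 1/2) (n : ℕ) (x : ℤ) :
    ((Set.ncard {R : Fin (n+1) → ℤ | R 0 = x ∧
        IsDeltaPath δ n (fun t => R ⟨min t n, Nat.lt_succ_of_le (min_le_right t n)⟩)}) : ℝ)
      ≤ (2:ℝ) ^ ((n:ℝ) * (1 + binEntropy δ + 3*δ)) := by
  classical
  set k := ⌊δ * (n:ℝ)⌋₊ with hkdef
  have hδn0 : (0:ℝ) ≤ δ * n := by positivity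
  have hkr : (k : ℝ) ≤ δ * n := Nat.floor_le hδn0
  have hmaps : ∀ R ∈ {R : Fin (n+1) → ℤ | R 0 = x ∧
      IsDeltaPath δ n (fun t => R ⟨min t n, Nat.lt_succ_of_le (min_le_right t n)⟩)},
      enc n k R ∈ (Set.univ : Set ((Fin n → Bool) ×
        {M : Finset (Fin n) // M.card ≤ k} × Finset (Fin (2*k)))) :=
    fun _ _ => Set.mem_univ _
  have hinj : Set.InjOn (enc n k) {R : Fin (n+1) → ℤ | R 0 = x ∧
      IsDeltaPath δ n (fun t => R ⟨min t n, Nat.lt_succ_of_le (min_le_right t n)⟩)} := by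
    intro R hR R' hR' heq
    obtain ⟨hx, hP⟩ := hR
    obtain ⟨hx', hP'⟩ := hR'
    obtain ⟨hc, hs⟩ := path_facts R hP
    obtain ⟨hc', hs'⟩ := path_facts R' hP'
    exact enc_inj (hx.trans hx'.symm) (Nat.le_floor hc) (Nat.le_floor hs)
      (Nat.le_floor hc') (Nat.le_floor hs') heq
  have h1 := Set.ncard_le_ncard_of_injOn (enc n k) hmaps hinj Set.finite_univ
  rw [Set.ncard_univ] at h1
  have hW : Nat.card ((Fin n → Bool) ×
        {M : Finset (Fin n) // M.card ≤ k} × Finset (Fin (2*k)))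
      = 2^n * ((Finset.univ : Finset (Finset (Fin n))).filter fun M => M.card ≤ k).card
          * 2^(2*k) := by
    rw [Nat.card_eq_fintype_card, Fintype.card_prod, Fintype.card_prod, Fintype.card_fun,
      Fintype.card_bool, Fintype.card_fin, Fintype.card_subtype, Fintype.card_finset,
      Fintype.card_fin, mul_assoc]
  have hNk := entropy_count δ hδ0 hδ n k hkr
  have h2k : ((2*k : ℕ) : ℝ) ≤ 3*δ*(n:ℝ) := by
    push_cast
    nlinarith [hkr, hδn0]
  calc ((Set.ncard {R : Fin (n+1) → ℤ | R 0 = x ∧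
        IsDeltaPath δ n (fun t => R ⟨min t n, Nat.lt_succ_of_le (min_le_right t n)⟩)}) : ℝ)
      ≤ ((Nat.card ((Fin n → Bool) ×
        {M : Finset (Fin n) // M.card ≤ k} × Finset (Fin (2*k)))) : ℝ) := by exact_mod_cast h1
    _ = (2:ℝ)^(n:ℕ)
          * (((Finset.univ : Finset (Finset (Fin n))).filter fun M => M.card ≤ k).card : ℝ)
          * (2:ℝ)^(2*k : ℕ) := by
        rw [hW]
        push_cast
        ring
    _ ≤ (2:ℝ)^((n:ℕ):ℝ) * (2:ℝ)^((n:ℝ) * binEntropy δ) * (2:ℝ)^(3*δ*(n:ℝ)) := by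
        rw [← Real.rpow_natCast 2 n, ← Real.rpow_natCast 2 (2*k)]
        apply mul_le_mul
        · exact mul_le_mul_of_nonneg_left hNk (by positivity)
        · exact Real.rpow_le_rpow_of_exponent_le one_le_two h2k
        · positivity
        · positivity
    _ = (2:ℝ) ^ ((n:ℝ) * (1 + binEntropy δ + 3*δ)) := by
        rw [← Real.rpow_add (by norm_num : (0:ℝ) < 2),
          ← Real.rpow_add (by norm_num : (0:ℝ) < 2)]
        congr 1
        ring
end

section
/- Fix δ ∈ (0, 1/2) such that (2.45 · 2^{1+H(δ)+3δ})/5 < 1. Let ξ be an i.i.d. uniform 5-color scenery and w the word of length n+1 read from an interval K ⊆ [−n,n]. For any fixed x ∈ ℤ whose every δ-path of length n ending at x stays outside [−n,n], the probability that some δ-path R of length n with R(n) = x satisfies ξ∘R = w is at most (2^{1+H(δ)+3δ}/5)^n. Summing over a set X of at most 2·2.45^n such points, P(∃x ∈ X, ∃ δ-path R ending at x with ξ∘R = w) ≤ 2·((2.45·2^{1+H(δ)+3δ})/5)^n, which tends to 0 exponentially. -/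
open MeasureTheory ProbabilityTheory Finset

/-- The path reconstructed from its steps and endpoint. -/
def pathOf (n : ℕ) (x : ℤ) (s : Fin n → ℤ) : ℕ → ℤ :=
  fun t => x - ∑ i ∈ Finset.univ.filter (fun i : Fin n => t ≤ (i : ℕ)), s i

lemma pathOf_last (n : ℕ) (x : ℤ) (s : Fin n → ℤ) : pathOf n x s n = x := by
  have : (Finset.univ.filter (fun i : Fin n => n ≤ (i : ℕ))) = ∅ := by
    ext i; simp [Nat.not_le.mpr i.isLt]
  simp [pathOf, this]

lemma pathOf_step (n : ℕ) (x : ℤ) (s : Fin n → ℤ) {t : ℕ} (ht : t < n) :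
    pathOf n x s (t+1) - pathOf n x s t = s ⟨t, ht⟩ := by
  have hsplit : (Finset.univ.filter (fun i : Fin n => t ≤ (i : ℕ)))
      = insert ⟨t, ht⟩ (Finset.univ.filter (fun i : Fin n => t+1 ≤ (i : ℕ))) := by
    ext i
    simp only [Finset.mem_filter, Finset.mem_univ, true_and, Finset.mem_insert]
    constructor
    · intro h
      rcases eq_or_lt_of_le h with h' | h'
      · left; exact Fin.ext h'.symm
      · right; omega
    · rintro (rfl | h)
      · simp
      · omega
  have hmem : (⟨t, ht⟩ : Fin n) ∉ (Finset.univ.filter (fun i : Fin n => t+1 ≤ (i : ℕ))) := by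
    simp
  rw [pathOf, pathOf, hsplit, Finset.sum_insert hmem]
  ring

lemma pathOf_eq (n : ℕ) (R : ℕ → ℤ) :
    ∀ t ≤ n, pathOf n (R n) (fun i : Fin n => R (i+1) - R i) t = R t := by
  have key : ∀ d, d ≤ n → pathOf n (R n) (fun i : Fin n => R (i+1) - R i) (n - d) = R (n - d) := by
    intro d hd
    induction d with
    | zero => simpa using pathOf_last n (R n) _
    | succ d ih =>
      have hd' : d ≤ n := le_of_lt (Nat.lt_of_lt_of_le (Nat.lt_succ_self d) hd)
      have ht : n - (d+1) < n := by omega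
      have hstep := pathOf_step n (R n) (fun i : Fin n => R (i+1) - R i) ht
      have he : n - (d+1) + 1 = n - d := by omega
      rw [he] at hstep
      have hih := ih hd'
      simp only at hstep
      omega
  intro t ht
  have : t = n - (n - t) := by omega
  rw [this]; exact key (n - t) (by omega)

lemma isDeltaPath_congr {δ : ℝ} {n : ℕ} {R R' : ℕ → ℤ}
    (h : ∀ t < n, R' (t+1) - R' t = R (t+1) - R t) (hR : IsDeltaPath δ n R) :
    IsDeltaPath δ n R' := by
  have hfil : (Finset.range n).filter (fun t => |R' (t+1) - R' t| ≠ 1)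
      = (Finset.range n).filter (fun t => |R (t+1) - R t| ≠ 1) := by
    apply Finset.filter_congr
    intro t ht
    rw [h t (Finset.mem_range.mp ht)]
  constructor
  · rw [hfil]; exact hR.1
  · rw [hfil]
    have : ∑ t ∈ (Finset.range n).filter (fun t => |R (t+1) - R t| ≠ 1), |R' (t+1) - R' t|
        = ∑ t ∈ (Finset.range n).filter (fun t => |R (t+1) - R t| ≠ 1), |R (t+1) - R t| := by
      apply Finset.sum_congr rfl
      intro t ht
      rw [h t (Finset.mem_range.mp (Finset.mem_filter.mp ht).1)]
    rw [this]; exact hR.2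

theorem stmt19_test : True := trivial
section Count

open scoped Classical in
/-- The finset of step sequences whose induced path ending at `x` is a δ-path. -/
noncomputable def Dset (δ : ℝ) (n : ℕ) (x : ℤ) : Finset (Fin n → ℤ) :=
  (Fintype.piFinset fun _ : Fin n => Finset.Icc (-(n:ℤ)-1) ((n:ℤ)+1)).filter
    (fun s => IsDeltaPath δ n (pathOf n x s))

lemma mem_Dset {δ : ℝ} {n : ℕ} {x : ℤ} {s : Fin n → ℤ} :
    s ∈ Dset δ n x ↔ (∀ i, s i ∈ Finset.Icc (-(n:ℤ)-1) ((n:ℤ)+1))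
      ∧ IsDeltaPath δ n (pathOf n x s) := by
  classical
  simp [Dset, Fintype.mem_piFinset]

lemma sum_Icc_half_pow (N : ℕ) : ∑ i ∈ Finset.Icc 2 N, ((1:ℝ)/2)^i ≤ 1/2 := by
  rcases Nat.lt_or_ge N 2 with hN | hN
  · have : Finset.Icc 2 N = ∅ := by
      apply Finset.Icc_eq_empty; omega
    simp [this]
  · have hIcc : Finset.Icc 2 N = Finset.Ico 2 (N+1) := by rw [Finset.Ico_add_one_right_eq_Icc]
    rw [hIcc, Finset.sum_Ico_eq_sub _ (by omega)]
    have hg : ∀ k : ℕ, ∑ i ∈ Finset.range k, ((1:ℝ)/2)^i = 2 - 2*(1/2)^k := by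
      intro k
      rw [geom_sum_eq (by norm_num)]
      field_simp
      ring
    rw [hg, hg]
    have : (0:ℝ) ≤ (1/2)^(N+1) := by positivity
    norm_num at this ⊢
lemma sum_g_le (n : ℕ) (X : ℝ) (hX0 : 0 ≤ X) :
    ∑ j ∈ Finset.Icc (-(n:ℤ)-1) ((n:ℤ)+1),
      (if |j| = 1 then (1/2:ℝ) else (X/2) * (1/2)^(j.natAbs)) ≤ 1 + X := by
  classical
  set B := Finset.Icc (-(n:ℤ)-1) ((n:ℤ)+1) with hB
  rw [← Finset.sum_filter_add_sum_filter_not B (fun j => |j| = 1)]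
  have hg0 : ∀ j : ℤ, (0:ℝ) ≤ (if |j| = 1 then (1/2:ℝ) else (X/2) * (1/2)^(j.natAbs)) := by
    intro j; split <;> positivity
  have h1 : ∑ j ∈ B.filter (fun j => |j| = 1),
      (if |j| = 1 then (1/2:ℝ) else (X/2) * (1/2)^(j.natAbs)) ≤ 1 := by
    have he : ∀ j ∈ B.filter (fun j => |j| = 1),
        (if |j| = 1 then (1/2:ℝ) else (X/2) * (1/2)^(j.natAbs)) = 1/2 := by
      intro j hj
      rw [if_pos (Finset.mem_filter.mp hj).2]
    rw [Finset.sum_congr rfl he, Finset.sum_const]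
    have hsub : B.filter (fun j => |j| = 1) ⊆ ({1, -1} : Finset ℤ) := by
      intro j hj
      have := (Finset.mem_filter.mp hj).2
      rcases (abs_eq (by norm_num : (0:ℤ) ≤ 1)).mp this with h | h <;> simp [h]
    have hcard : (B.filter (fun j => |j| = 1)).card ≤ 2 := by
      calc (B.filter (fun j => |j| = 1)).card ≤ ({1, -1} : Finset ℤ).card :=
            Finset.card_le_card hsub
        _ ≤ 2 := by norm_num
    calc (B.filter (fun j => |j| = 1)).card • ((1:ℝ)/2)
        = ((B.filter (fun j => |j| = 1)).card : ℝ) * (1/2) := nsmul_eq_mul _ _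
      _ ≤ 2 * (1/2) := by
          apply mul_le_mul_of_nonneg_right _ (by norm_num)
          exact_mod_cast hcard
      _ = 1 := by norm_num
  have h2 : ∑ j ∈ B.filter (fun j => ¬ |j| = 1),
      (if |j| = 1 then (1/2:ℝ) else (X/2) * (1/2)^(j.natAbs)) ≤ X := by
    have he : ∀ j ∈ B.filter (fun j => ¬ |j| = 1),
        (if |j| = 1 then (1/2:ℝ) else (X/2) * (1/2)^(j.natAbs))
          = (X/2) * (1/2)^(j.natAbs) := by
      intro j hj
      rw [if_neg (Finset.mem_filter.mp hj).2]
    rw [Finset.sum_congr rfl he, ← Finset.mul_sum]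
    have hkey : ∑ j ∈ B.filter (fun j => ¬ |j| = 1), ((1:ℝ)/2)^(j.natAbs) ≤ 2 := by
      set A : Finset ℤ := (Finset.Icc 2 (n+1)).image (fun i : ℕ => (i:ℤ)) with hA
      set A' : Finset ℤ := (Finset.Icc 2 (n+1)).image (fun i : ℕ => -(i:ℤ)) with hA'
      have hsub : B.filter (fun j => ¬ |j| = 1) ⊆ insert 0 (A ∪ A') := by
        intro j hj
        obtain ⟨hjB, hj1⟩ := Finset.mem_filter.mp hj
        rcases eq_or_ne j 0 with rfl | hj0
        · exact Finset.mem_insert_self _ _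
        · apply Finset.mem_insert_of_mem
          have hjB' := Finset.mem_Icc.mp hjB
          have habs : |j| ≤ (n:ℤ)+1 := abs_le.mpr ⟨by omega, by omega⟩
          have hnat1 : j.natAbs ≠ 1 := by
            intro h
            apply hj1
            rw [Int.abs_eq_natAbs, h]
            norm_num
          have hnat0 : j.natAbs ≠ 0 := Int.natAbs_ne_zero.mpr hj0
          have hnatle : j.natAbs ≤ n+1 := by
            have := Int.abs_eq_natAbs j
            omega
          have hmemIcc : j.natAbs ∈ Finset.Icc 2 (n+1) := by
            rw [Finset.mem_Icc]; omega
          rcases Int.natAbs_eq j with h | h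
          · apply Finset.mem_union_left
            rw [hA]
            exact Finset.mem_image.mpr ⟨j.natAbs, hmemIcc, h.symm⟩
          · apply Finset.mem_union_right
            rw [hA']
            exact Finset.mem_image.mpr ⟨j.natAbs, hmemIcc, h.symm⟩
      have h0A : (0:ℤ) ∉ A ∪ A' := by
        intro h
        rcases Finset.mem_union.mp h with h | h <;>
          · obtain ⟨i, hi, hie⟩ := Finset.mem_image.mp h
            have := Finset.mem_Icc.mp hi
            omega
      have hdisj : Disjoint A A' := by
        rw [Finset.disjoint_left]
        intro a ha ha'
        obtain ⟨i, hi, rfl⟩ := Finset.mem_image.mp ha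
        obtain ⟨i', hi', he'⟩ := Finset.mem_image.mp ha'
        have h1 := Finset.mem_Icc.mp hi
        have h2 := Finset.mem_Icc.mp hi'
        omega
      have hAsum : ∑ j ∈ A, ((1:ℝ)/2)^(j.natAbs) ≤ 1/2 := by
        rw [hA, Finset.sum_image (by intro a _ b _ h; simp only at h; exact_mod_cast h)]
        calc ∑ i ∈ Finset.Icc 2 (n+1), ((1:ℝ)/2)^((i:ℤ).natAbs)
            = ∑ i ∈ Finset.Icc 2 (n+1), ((1:ℝ)/2)^i := by
              apply Finset.sum_congr rfl; intro i _; rw [Int.natAbs_natCast]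
          _ ≤ 1/2 := sum_Icc_half_pow (n+1)
      have hA'sum : ∑ j ∈ A', ((1:ℝ)/2)^(j.natAbs) ≤ 1/2 := by
        rw [hA', Finset.sum_image (by intro a _ b _ h; simp only at h; omega)]
        calc ∑ i ∈ Finset.Icc 2 (n+1), ((1:ℝ)/2)^((-(i:ℤ)).natAbs)
            = ∑ i ∈ Finset.Icc 2 (n+1), ((1:ℝ)/2)^i := by
              apply Finset.sum_congr rfl; intro i _
              rw [Int.natAbs_neg, Int.natAbs_natCast]
          _ ≤ 1/2 := sum_Icc_half_pow (n+1)
      calc ∑ j ∈ B.filter (fun j => ¬ |j| = 1), ((1:ℝ)/2)^(j.natAbs)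
          ≤ ∑ j ∈ insert 0 (A ∪ A'), ((1:ℝ)/2)^(j.natAbs) :=
            Finset.sum_le_sum_of_subset_of_nonneg hsub (by intro j _ _; positivity)
        _ = 1 + ∑ j ∈ A ∪ A', ((1:ℝ)/2)^(j.natAbs) := by
            rw [Finset.sum_insert h0A]; norm_num
        _ = 1 + (∑ j ∈ A, ((1:ℝ)/2)^(j.natAbs) + ∑ j ∈ A', ((1:ℝ)/2)^(j.natAbs)) := by
            rw [Finset.sum_union hdisj]
        _ ≤ 1 + (1/2 + 1/2) := by linarith
        _ = 2 := by norm_num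
    calc (X/2) * ∑ j ∈ B.filter (fun j => ¬ |j| = 1), ((1:ℝ)/2)^(j.natAbs)
        ≤ (X/2) * 2 := by
          apply mul_le_mul_of_nonneg_left hkey (by positivity)
      _ = X := by ring
  linarith
lemma card_Dset_le (δ : ℝ) (hδ0 : 0 < δ) (hδhalf : δ < 1/2) (n : ℕ) (x : ℤ) :
    ((Dset δ n x).card : ℝ) ≤ (2:ℝ) ^ ((n:ℝ) * (1 + binEntropy δ + 3*δ)) := by
  classical
  have h1δ : 0 < 1 - δ := by linarith
  set X : ℝ := δ / (1 - δ) with hXdef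
  have hX0 : 0 < X := div_pos hδ0 h1δ
  have hX1 : X < 1 := (div_lt_one h1δ).mpr (by linarith)
  have hδn : 0 ≤ δ * n := by positivity
  set g : ℤ → ℝ := fun j => if |j| = 1 then (1/2:ℝ) else (X/2) * (1/2)^(j.natAbs) with hgdef
  have hg0 : ∀ j, 0 ≤ g j := by
    intro j; rw [hgdef]; dsimp only; split <;> positivity
  set c : ℝ := (2:ℝ)^(-(n:ℝ)) * ((X/2)^(δ*n) * (2:ℝ)^(-(δ*n))) with hcdef
  have hc0 : 0 < c := by rw [hcdef]; positivity
  have hlow : ∀ s ∈ Dset δ n x, c ≤ ∏ i, g (s i) := by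
    intro s hs
    obtain ⟨hbox, hpath⟩ := mem_Dset.mp hs
    have hdiff : ∀ i : Fin n, pathOf n x s ((i:ℕ)+1) - pathOf n x s (i:ℕ) = s i := by
      intro i
      have := pathOf_step n x s i.isLt
      simpa using this
    set F : Finset (Fin n) := Finset.univ.filter (fun i : Fin n => |s i| ≠ 1) with hF
    set k : ℕ := F.card with hk
    set V : ℕ := ∑ i ∈ F, (s i).natAbs with hV
    have hkle : (k:ℝ) ≤ δ * n := by
      have hcardeq : k = ((Finset.range n).filter
          (fun t => |pathOf n x s (t+1) - pathOf n x s t| ≠ 1)).card := by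
        rw [hk, hF, Finset.card_filter, Finset.card_filter,
          ← Fin.sum_univ_eq_sum_range
            (fun t => if |pathOf n x s (t+1) - pathOf n x s t| ≠ 1 then 1 else 0)]
        exact Finset.sum_congr rfl (fun i _ => by rw [hdiff i])
      rw [hcardeq]
      exact hpath.1
    have hVle : (V:ℝ) ≤ δ * n := by
      have hsumeq : (V:ℤ) = ∑ t ∈ (Finset.range n).filter
          (fun t => |pathOf n x s (t+1) - pathOf n x s t| ≠ 1),
            |pathOf n x s (t+1) - pathOf n x s t| := by
        rw [hV]
        push_cast
        rw [Finset.sum_filter, Finset.sum_filter,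
          ← Fin.sum_univ_eq_sum_range
            (fun t => if |pathOf n x s (t+1) - pathOf n x s t| ≠ 1
              then |pathOf n x s (t+1) - pathOf n x s t| else 0)]
        exact Finset.sum_congr rfl (fun i _ => by rw [hdiff i])
      have := hpath.2
      rw [← hsumeq] at this
      exact_mod_cast this
    set cnot : ℕ := (Finset.univ.filter (fun i : Fin n => ¬ |s i| ≠ 1)).card with hcnot
    have hcnotle : (cnot:ℝ) ≤ (n:ℝ) := by
      have : cnot ≤ n := by
        rw [hcnot]
        calc (Finset.univ.filter (fun i : Fin n => ¬ |s i| ≠ 1)).card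
            ≤ Finset.univ.card := Finset.card_filter_le _ _
          _ = n := by rw [Finset.card_univ, Fintype.card_fin]
      exact_mod_cast this
    have hprodeq : ∏ i, g (s i)
        = (2:ℝ)^(-(cnot:ℝ)) * ((X/2)^((k:ℝ)) * (2:ℝ)^(-(V:ℝ))) := by
      have hhalfV : ((1:ℝ)/2)^V = (2:ℝ)^(-(V:ℝ)) := by
        rw [Real.rpow_neg (by norm_num : (0:ℝ) ≤ 2), Real.rpow_natCast, one_div, inv_pow]
      have hhalfC : ((1:ℝ)/2)^cnot = (2:ℝ)^(-(cnot:ℝ)) := by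
        rw [Real.rpow_neg (by norm_num : (0:ℝ) ≤ 2), Real.rpow_natCast, one_div, inv_pow]
      have hXk : ((X/2):ℝ)^k = (X/2)^((k:ℝ)) := (Real.rpow_natCast _ _).symm
      rw [← Finset.prod_filter_mul_prod_filter_not Finset.univ
        (fun i : Fin n => |s i| ≠ 1) (fun i => g (s i))]
      have h1 : ∏ i ∈ Finset.univ.filter (fun i : Fin n => |s i| ≠ 1), g (s i)
          = (X/2)^k * (1/2:ℝ)^V := by
        have he : ∀ i ∈ Finset.univ.filter (fun i : Fin n => |s i| ≠ 1),
            g (s i) = (X/2) * (1/2:ℝ)^((s i).natAbs) := by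
          intro i hi
          have h1' : ¬ |s i| = 1 := (Finset.mem_filter.mp hi).2
          rw [hgdef]; dsimp only; rw [if_neg h1']
        rw [Finset.prod_congr rfl he, Finset.prod_mul_distrib, Finset.prod_const,
          Finset.prod_pow_eq_pow_sum, ← hF, ← hk, ← hV]
      have h2 : ∏ i ∈ Finset.univ.filter (fun i : Fin n => ¬ |s i| ≠ 1), g (s i)
          = (1/2:ℝ)^cnot := by
        have he : ∀ i ∈ Finset.univ.filter (fun i : Fin n => ¬ |s i| ≠ 1),
            g (s i) = (1/2:ℝ) := by
          intro i hi
          have h1' : |s i| = 1 := not_not.mp (Finset.mem_filter.mp hi).2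
          rw [hgdef]; dsimp only; rw [if_pos h1']
        rw [Finset.prod_congr rfl he, Finset.prod_const, ← hcnot]
      rw [h1, h2, hhalfV, hhalfC, hXk]
      ring
    rw [hprodeq, hcdef]
    have hA : (X/2)^(δ*n) ≤ (X/2)^((k:ℝ)) :=
      Real.rpow_le_rpow_of_exponent_ge (by positivity) (by linarith) hkle
    have hB : (2:ℝ)^(-(δ*n)) ≤ (2:ℝ)^(-(V:ℝ)) :=
      Real.rpow_le_rpow_of_exponent_le one_le_two (neg_le_neg hVle)
    have hC : (2:ℝ)^(-(n:ℝ)) ≤ (2:ℝ)^(-(cnot:ℝ)) :=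
      Real.rpow_le_rpow_of_exponent_le one_le_two (neg_le_neg hcnotle)
    apply mul_le_mul hC (mul_le_mul hA hB (by positivity) (Real.rpow_nonneg (by positivity) _))
      (by positivity) (Real.rpow_nonneg (by norm_num) _)
  have hsum : ((Dset δ n x).card : ℝ) * c ≤ (1+X)^n := by
    calc ((Dset δ n x).card : ℝ) * c = ∑ _s ∈ Dset δ n x, c := by
          rw [Finset.sum_const, nsmul_eq_mul]
      _ ≤ ∑ s ∈ Dset δ n x, ∏ i, g (s i) := Finset.sum_le_sum hlow
      _ ≤ ∑ s ∈ (Fintype.piFinset fun _ : Fin n => Finset.Icc (-(n:ℤ)-1) ((n:ℤ)+1)),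
            ∏ i, g (s i) := by
          apply Finset.sum_le_sum_of_subset_of_nonneg
          · intro s hs
            exact Fintype.mem_piFinset.mpr (mem_Dset.mp hs).1
          · intro s _ _
            exact Finset.prod_nonneg fun i _ => hg0 _
      _ = ∏ _i : Fin n, ∑ j ∈ Finset.Icc (-(n:ℤ)-1) ((n:ℤ)+1), g j :=
          (Finset.prod_univ_sum _ _).symm
      _ = (∑ j ∈ Finset.Icc (-(n:ℤ)-1) ((n:ℤ)+1), g j)^n := by
          rw [Finset.prod_const, Finset.card_univ, Fintype.card_fin]
      _ ≤ (1+X)^n := by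
          apply pow_le_pow_left₀ (Finset.sum_nonneg fun j _ => hg0 j)
          rw [hgdef]
          exact sum_g_le n X hX0.le
  have h1Xpos : (0:ℝ) < 1 + X := by linarith
  have h1X : 1 + X = (1-δ)⁻¹ := by
    rw [hXdef]; field_simp; ring
  have hlogb2 : Real.logb 2 (X/2) = Real.logb 2 δ - Real.logb 2 (1-δ) - 1 := by
    rw [Real.logb_div (ne_of_gt hX0) (by norm_num), hXdef,
      Real.logb_div (ne_of_gt hδ0) (ne_of_gt h1δ)]
    simp [Real.logb_self_eq_one]
  have hlog1X : Real.logb 2 (1+X) = - Real.logb 2 (1-δ) := by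
    rw [h1X, Real.logb_inv]
  have hE : Real.logb 2 (1+X) * (n:ℝ)
      ≤ (n:ℝ)*(1 + binEntropy δ + 3*δ) + (-(n:ℝ))
        + (Real.logb 2 (X/2) * (δ*n)) + (-(δ*n)) := by
    rw [hlog1X, hlogb2, binEntropy]
    nlinarith [mul_nonneg hδ0.le (Nat.cast_nonneg n : (0:ℝ) ≤ (n:ℝ))]
  have htarget : (1+X)^n ≤ (2:ℝ)^((n:ℝ)*(1 + binEntropy δ + 3*δ)) * c := by
    calc (1+X)^n = (2:ℝ)^(Real.logb 2 (1+X) * (n:ℝ)) := by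
          rw [Real.rpow_mul (by norm_num : (0:ℝ) ≤ 2), Real.rpow_logb two_pos (by norm_num) h1Xpos,
            Real.rpow_natCast]
      _ ≤ (2:ℝ)^((n:ℝ)*(1 + binEntropy δ + 3*δ) + (-(n:ℝ))
            + (Real.logb 2 (X/2) * (δ*n)) + (-(δ*n))) :=
          Real.rpow_le_rpow_of_exponent_le one_le_two hE
      _ = (2:ℝ)^((n:ℝ)*(1 + binEntropy δ + 3*δ)) * c := by
          rw [Real.rpow_add two_pos, Real.rpow_add two_pos, Real.rpow_add two_pos, hcdef,
            Real.rpow_mul (by norm_num : (0:ℝ) ≤ 2) (Real.logb 2 (X/2)) (δ*n),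
            Real.rpow_logb two_pos (by norm_num) (by positivity)]
          ring
  exact le_of_mul_le_mul_right (hsum.trans htarget) hc0
end Count
section Indep
open scoped ENNReal

lemma indep_bound {Ω : Type*} [MeasurableSpace Ω] (P : Measure Ω) [IsProbabilityMeasure P]
    (ξ : ℤ → Ω → Fin 5) (hmeas : ∀ z, Measurable (ξ z))
    (hindep : iIndepFun ξ P)
    (hunif : ∀ z e, P {ω | ξ z ω = e} = 1/5)
    (n : ℕ) (k₁ : ℤ)
    (hk : ∀ t : ℕ, t ≤ n → k₁ + (t:ℤ) ∈ Set.Icc (-(n:ℤ)) (n:ℤ))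
    (R : ℕ → ℤ) (hR : ∀ t ≤ n, R t ∉ Set.Icc (-(n:ℤ)) (n:ℤ)) :
    P {ω | ∀ t ≤ n, ξ (R t) ω = ξ (k₁ + t) ω} ≤ (1/5 : ℝ≥0∞)^(n+1) := by
  classical
  set T : (Fin (n+1) → Fin 5) → ℤ → Set (Fin 5) := fun w z =>
    {e | ∀ i : Fin (n+1), (k₁ + ((i:ℕ):ℤ) = z → e = w i) ∧ (R (i:ℕ) = z → e = w i)} with hT
  set S₁ : Finset ℤ := Finset.univ.image (fun i : Fin (n+1) => k₁ + ((i:ℕ):ℤ)) with hS₁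
  set S₂ : Finset ℤ := Finset.univ.image (fun i : Fin (n+1) => R (i:ℕ)) with hS₂
  have hdisj : Disjoint S₁ S₂ := by
    rw [Finset.disjoint_left]
    intro z hz1 hz2
    obtain ⟨i, _, rfl⟩ := Finset.mem_image.mp hz1
    obtain ⟨j, _, hj⟩ := Finset.mem_image.mp hz2
    exact hR (j:ℕ) (Nat.lt_succ_iff.mp j.isLt) (hj ▸ hk (i:ℕ) (Nat.lt_succ_iff.mp i.isLt))
  have hTmeas : ∀ (w : Fin (n+1) → Fin 5) (z : ℤ), MeasurableSet (T w z) := by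
    intro w z
    exact MeasurableSet.of_discrete
  have hkey := iIndepFun_iff_measure_inter_preimage_eq_mul.mp hindep
  have hprod : ∀ w, P (⋂ z ∈ (S₁ ∪ S₂ : Finset ℤ), ξ z ⁻¹' T w z)
      = (∏ z ∈ S₁, P (ξ z ⁻¹' T w z)) * ∏ z ∈ S₂, P (ξ z ⁻¹' T w z) := by
    intro w
    rw [hkey (S₁ ∪ S₂) (fun z _ => hTmeas w z), Finset.prod_union hdisj]
  have hinj : Function.Injective (fun i : Fin (n+1) => k₁ + ((i:ℕ):ℤ)) := by
    intro i j h
    simp only at h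
    exact Fin.ext (by exact_mod_cast add_left_cancel h)
  have hS1bound : ∀ w, ∏ z ∈ S₁, P (ξ z ⁻¹' T w z) ≤ (1/5 : ℝ≥0∞)^(n+1) := by
    intro w
    have hle : ∀ z ∈ S₁, P (ξ z ⁻¹' T w z) ≤ (1/5 : ℝ≥0∞) := by
      intro z hz
      obtain ⟨i, _, rfl⟩ := Finset.mem_image.mp hz
      have hsub : T w (k₁ + ((i:ℕ):ℤ)) ⊆ {w i} := by
        intro e he
        exact (he i).1 rfl
      calc P (ξ (k₁ + ((i:ℕ):ℤ)) ⁻¹' T w (k₁ + ((i:ℕ):ℤ)))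
          ≤ P (ξ (k₁ + ((i:ℕ):ℤ)) ⁻¹' {w i}) := measure_mono (Set.preimage_mono hsub)
        _ = (1/5 : ℝ≥0∞) := by
            have : ξ (k₁ + ((i:ℕ):ℤ)) ⁻¹' {w i} = {ω | ξ (k₁ + ((i:ℕ):ℤ)) ω = w i} := by
              ext ω; simp
            rw [this]
            exact hunif _ _
    calc ∏ z ∈ S₁, P (ξ z ⁻¹' T w z) ≤ ∏ _z ∈ S₁, (1/5 : ℝ≥0∞) :=
          Finset.prod_le_prod' hle
      _ = (1/5 : ℝ≥0∞)^(S₁.card) := Finset.prod_const _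
      _ = (1/5 : ℝ≥0∞)^(n+1) := by
          rw [hS₁, Finset.card_image_of_injective _ hinj, Finset.card_univ, Fintype.card_fin]
  set B' : (Fin (n+1) → Fin 5) → Set Ω := fun w => ⋂ z ∈ S₂, ξ z ⁻¹' T w z with hB'
  have hB'meas : ∀ w, MeasurableSet (B' w) := by
    intro w
    exact MeasurableSet.biInter S₂.countable_toSet (fun z _ => (hmeas z) (hTmeas w z))
  have hprodB : ∀ w, ∏ z ∈ S₂, P (ξ z ⁻¹' T w z) = P (B' w) := by
    intro w
    rw [hB']
    exact (hkey S₂ (fun z _ => hTmeas w z)).symm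
  have hdisjB : Pairwise (Function.onFun Disjoint B') := by
    intro w w' hww
    rw [Function.onFun, Set.disjoint_left]
    intro ω hw hw'
    apply hww
    funext i
    have hz : R (i:ℕ) ∈ S₂ := by
      rw [hS₂]
      exact Finset.mem_image_of_mem _ (Finset.mem_univ i)
    have h1 : ξ (R (i:ℕ)) ω ∈ T w (R (i:ℕ)) := Set.mem_iInter₂.mp hw (R (i:ℕ)) hz
    have h2 : ξ (R (i:ℕ)) ω ∈ T w' (R (i:ℕ)) := Set.mem_iInter₂.mp hw' (R (i:ℕ)) hz
    have e1 : ξ (R (i:ℕ)) ω = w i := (h1 i).2 rfl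
    have e2 : ξ (R (i:ℕ)) ω = w' i := (h2 i).2 rfl
    rw [← e1, e2]
  have hsumB : ∑ w : Fin (n+1) → Fin 5, P (B' w) ≤ 1 := by
    rw [← tsum_fintype (L := SummationFilter.unconditional _), ← measure_iUnion hdisjB hB'meas]
    exact prob_le_one
  have hsubset : {ω | ∀ t ≤ n, ξ (R t) ω = ξ (k₁ + t) ω}
      ⊆ ⋃ w : Fin (n+1) → Fin 5, ⋂ z ∈ (S₁ ∪ S₂ : Finset ℤ), ξ z ⁻¹' T w z := by
    intro ω hω
    refine Set.mem_iUnion.mpr ⟨fun i => ξ (k₁ + ((i:ℕ):ℤ)) ω, ?_⟩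
    refine Set.mem_iInter₂.mpr ?_
    intro z _
    intro i
    constructor
    · rintro rfl
      rfl
    · rintro rfl
      exact hω (i:ℕ) (Nat.lt_succ_iff.mp i.isLt)
  calc P {ω | ∀ t ≤ n, ξ (R t) ω = ξ (k₁ + t) ω}
      ≤ P (⋃ w : Fin (n+1) → Fin 5, ⋂ z ∈ (S₁ ∪ S₂ : Finset ℤ), ξ z ⁻¹' T w z) :=
        measure_mono hsubset
    _ ≤ ∑' w : Fin (n+1) → Fin 5, P (⋂ z ∈ (S₁ ∪ S₂ : Finset ℤ), ξ z ⁻¹' T w z) :=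
        measure_iUnion_le _
    _ = ∑ w : Fin (n+1) → Fin 5, P (⋂ z ∈ (S₁ ∪ S₂ : Finset ℤ), ξ z ⁻¹' T w z) :=
        tsum_fintype _
    _ = ∑ w : Fin (n+1) → Fin 5,
          (∏ z ∈ S₁, P (ξ z ⁻¹' T w z)) * P (B' w) := by
        apply Finset.sum_congr rfl
        intro w _
        rw [hprod w, hprodB w]
    _ ≤ ∑ w : Fin (n+1) → Fin 5, (1/5 : ℝ≥0∞)^(n+1) * P (B' w) := by
        apply Finset.sum_le_sum
        intro w _
        exact mul_le_mul_left (hS1bound w) _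
    _ = (1/5 : ℝ≥0∞)^(n+1) * ∑ w : Fin (n+1) → Fin 5, P (B' w) := by
        rw [Finset.mul_sum]
    _ ≤ (1/5 : ℝ≥0∞)^(n+1) * 1 := mul_le_mul_right hsumB _
    _ = (1/5 : ℝ≥0∞)^(n+1) := mul_one _

end Indep
open scoped ENNReal in
/-- High probability of `F₀ⁿ`: for an i.i.d. uniform 5-color scenery and word
`w = ξ|_{[k₁,k₂]}` with `[k₁,k₂] ⊆ [−n,n]`, for any point `x` all of whose δ-paths of
length `n` ending at `x` avoid `[−n,n]`, the probability that some δ-path ending at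
`x` generates `w` is at most `(2^{1+H(δ)+3δ}/5)^n`; and for a set `X` of at most
`2·2.45^n` such points, the union-bound probability is at most
`2·((2.45·2^{1+H(δ)+3δ})/5)^n`. -/
theorem stmt19 {Ω : Type*} [MeasurableSpace Ω] (P : Measure Ω) [IsProbabilityMeasure P]
    (δ : ℝ) (hδ0 : 0 < δ) (hδhalf : δ < 1/2)
    (hsmall : (2.45:ℝ) * (2:ℝ) ^ ((1:ℝ) + binEntropy δ + 3*δ) / 5 < 1)
    (ξ : ℤ → Ω → Fin 5)
    (hmeas : ∀ z, Measurable (ξ z))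
    (hindep : iIndepFun ξ P)
    (hunif : ∀ z e, P {ω | ξ z ω = e} = 1/5)
    (n : ℕ) (k₁ k₂ : ℤ) (hk₁ : -(n:ℤ) ≤ k₁) (hk₂ : k₂ ≤ (n:ℤ)) (hlen : k₂ - k₁ = n) :
    (∀ x : ℤ,
      (∀ R : ℕ → ℤ, IsDeltaPath δ n R → R n = x →
        ∀ t ≤ n, R t ∉ Set.Icc (-(n:ℤ)) (n:ℤ)) →
      (P {ω | ∃ R : ℕ → ℤ, IsDeltaPath δ n R ∧ R n = x ∧
          ∀ t ≤ n, ξ (R t) ω = ξ (k₁ + t) ω}).toReal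
        ≤ ((2:ℝ) ^ ((1:ℝ) + binEntropy δ + 3*δ) / 5)^n) ∧
    (∀ X : Finset ℤ, (X.card : ℝ) ≤ 2 * (2.45:ℝ)^n →
      (∀ x ∈ X, ∀ R : ℕ → ℤ, IsDeltaPath δ n R → R n = x →
        ∀ t ≤ n, R t ∉ Set.Icc (-(n:ℤ)) (n:ℤ)) →
      (P {ω | ∃ x ∈ X, ∃ R : ℕ → ℤ, IsDeltaPath δ n R ∧ R n = x ∧
          ∀ t ≤ n, ξ (R t) ω = ξ (k₁ + t) ω}).toReal
        ≤ 2 * ((2.45:ℝ) * (2:ℝ) ^ ((1:ℝ) + binEntropy δ + 3*δ) / 5)^n) := by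
  classical
  set e : ℝ := (1:ℝ) + binEntropy δ + 3*δ with hedef
  have hk : ∀ t : ℕ, t ≤ n → k₁ + (t:ℤ) ∈ Set.Icc (-(n:ℤ)) (n:ℤ) := by
    intro t ht
    rw [Set.mem_Icc]
    constructor <;> omega
  have h1 : ∀ x : ℤ,
      (∀ R : ℕ → ℤ, IsDeltaPath δ n R → R n = x →
        ∀ t ≤ n, R t ∉ Set.Icc (-(n:ℤ)) (n:ℤ)) →
      (P {ω | ∃ R : ℕ → ℤ, IsDeltaPath δ n R ∧ R n = x ∧
          ∀ t ≤ n, ξ (R t) ω = ξ (k₁ + t) ω}).toReal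
        ≤ ((2:ℝ) ^ e / 5)^n := by
    intro x hx
    have hsub : {ω | ∃ R : ℕ → ℤ, IsDeltaPath δ n R ∧ R n = x ∧
          ∀ t ≤ n, ξ (R t) ω = ξ (k₁ + t) ω}
        ⊆ ⋃ s ∈ Dset δ n x, {ω | ∀ t ≤ n, ξ (pathOf n x s t) ω = ξ (k₁ + t) ω} := by
      rintro ω ⟨R, hRd, hRn, hmatch⟩
      have hsD : (fun i : Fin n => R ((i:ℕ)+1) - R (i:ℕ)) ∈ Dset δ n x := by
        rw [mem_Dset]
        constructor
        · intro i
          rw [Finset.mem_Icc]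
          have habs : |R ((i:ℕ)+1) - R (i:ℕ)| ≤ (n:ℤ)+1 := by
            by_cases h1' : |R ((i:ℕ)+1) - R (i:ℕ)| = 1
            · omega
            · have hmemf : (i:ℕ) ∈ (Finset.range n).filter
                  (fun t => |R (t+1) - R t| ≠ 1) := by
                rw [Finset.mem_filter, Finset.mem_range]
                exact ⟨i.isLt, h1'⟩
              have hone : |R ((i:ℕ)+1) - R (i:ℕ)|
                  ≤ ∑ t ∈ (Finset.range n).filter (fun t => |R (t+1) - R t| ≠ 1),
                      |R (t+1) - R t| :=
                Finset.single_le_sum (f := fun t => |R (t+1) - R t|)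
                  (fun t _ => abs_nonneg _) hmemf
              have hr : (|R ((i:ℕ)+1) - R (i:ℕ)| : ℝ) ≤ (n:ℝ)+1 := by
                calc (|R ((i:ℕ)+1) - R (i:ℕ)| : ℝ)
                    ≤ ((∑ t ∈ (Finset.range n).filter (fun t => |R (t+1) - R t| ≠ 1),
                        |R (t+1) - R t| : ℤ) : ℝ) := by exact_mod_cast hone
                  _ ≤ δ * n := hRd.2
                  _ ≤ (n:ℝ)+1 := by nlinarith [(Nat.cast_nonneg n : (0:ℝ) ≤ (n:ℝ)), hδ0.le]
              exact_mod_cast hr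
          rw [abs_le] at habs
          omega
        · apply isDeltaPath_congr _ hRd
          intro t ht
          rw [pathOf_step n x _ ht]
      refine Set.mem_iUnion₂.mpr ⟨_, hsD, ?_⟩
      intro t ht
      have hpe : pathOf n x (fun i : Fin n => R ((i:ℕ)+1) - R (i:ℕ)) t = R t := by
        rw [← hRn]
        exact pathOf_eq n R t ht
      rw [hpe]
      exact hmatch t ht
    have hbound : P {ω | ∃ R : ℕ → ℤ, IsDeltaPath δ n R ∧ R n = x ∧
          ∀ t ≤ n, ξ (R t) ω = ξ (k₁ + t) ω}
        ≤ ((Dset δ n x).card : ℝ≥0∞) * (1/5 : ℝ≥0∞)^(n+1) := by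
      calc P {ω | ∃ R : ℕ → ℤ, IsDeltaPath δ n R ∧ R n = x ∧
            ∀ t ≤ n, ξ (R t) ω = ξ (k₁ + t) ω}
          ≤ P (⋃ s ∈ Dset δ n x,
              {ω | ∀ t ≤ n, ξ (pathOf n x s t) ω = ξ (k₁ + t) ω}) := measure_mono hsub
        _ ≤ ∑ s ∈ Dset δ n x,
              P {ω | ∀ t ≤ n, ξ (pathOf n x s t) ω = ξ (k₁ + t) ω} :=
            measure_biUnion_finset_le _ _
        _ ≤ ∑ _s ∈ Dset δ n x, (1/5 : ℝ≥0∞)^(n+1) := by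
            apply Finset.sum_le_sum
            intro s hs
            have hd := (mem_Dset.mp hs).2
            exact indep_bound P ξ hmeas hindep hunif n k₁ hk (pathOf n x s)
              (hx (pathOf n x s) hd (pathOf_last n x s))
        _ = ((Dset δ n x).card : ℝ≥0∞) * (1/5 : ℝ≥0∞)^(n+1) := by
            rw [Finset.sum_const, nsmul_eq_mul]
    have htR : (P {ω | ∃ R : ℕ → ℤ, IsDeltaPath δ n R ∧ R n = x ∧
          ∀ t ≤ n, ξ (R t) ω = ξ (k₁ + t) ω}).toReal
        ≤ ((Dset δ n x).card : ℝ) * (1/5 : ℝ)^(n+1) := by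
      have hne : ((Dset δ n x).card : ℝ≥0∞) * (1/5 : ℝ≥0∞)^(n+1) ≠ ⊤ := by
        apply ENNReal.mul_ne_top (ENNReal.natCast_ne_top _)
        apply ENNReal.pow_ne_top
        simp
      calc (P _).toReal ≤ (((Dset δ n x).card : ℝ≥0∞) * (1/5 : ℝ≥0∞)^(n+1)).toReal :=
            ENNReal.toReal_mono hne hbound
        _ = ((Dset δ n x).card : ℝ) * (1/5 : ℝ)^(n+1) := by
            rw [ENNReal.toReal_mul, ENNReal.toReal_pow]
            norm_num
    have hpow : ((2:ℝ)^e)^n = (2:ℝ)^((n:ℝ)*e) := by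
      rw [← Real.rpow_natCast ((2:ℝ)^e) n, ← Real.rpow_mul (by norm_num : (0:ℝ) ≤ 2),
        mul_comm]
    calc (P {ω | ∃ R : ℕ → ℤ, IsDeltaPath δ n R ∧ R n = x ∧
          ∀ t ≤ n, ξ (R t) ω = ξ (k₁ + t) ω}).toReal
        ≤ ((Dset δ n x).card : ℝ) * (1/5 : ℝ)^(n+1) := htR
      _ ≤ (2:ℝ)^((n:ℝ)*e) * (1/5 : ℝ)^(n+1) :=
          mul_le_mul_of_nonneg_right (card_Dset_le δ hδ0 hδhalf n x) (by positivity)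
      _ ≤ (2:ℝ)^((n:ℝ)*e) * (1/5 : ℝ)^n := by
          apply mul_le_mul_of_nonneg_left _ (Real.rpow_nonneg (by norm_num) _)
          rw [pow_succ]
          nlinarith [pow_nonneg (by norm_num : (0:ℝ) ≤ 1/5) n]
      _ = ((2:ℝ)^e / 5)^n := by
          rw [← hpow, ← mul_pow]
          congr 1
          ring
  refine ⟨h1, ?_⟩
  intro X hXcard hXavoid
  have hEq : {ω | ∃ x ∈ X, ∃ R : ℕ → ℤ, IsDeltaPath δ n R ∧ R n = x ∧
        ∀ t ≤ n, ξ (R t) ω = ξ (k₁ + t) ω}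
      = ⋃ x ∈ X, {ω | ∃ R : ℕ → ℤ, IsDeltaPath δ n R ∧ R n = x ∧
        ∀ t ≤ n, ξ (R t) ω = ξ (k₁ + t) ω} := by
    ext ω
    simp [Set.mem_iUnion]
  rw [hEq]
  have hle : P (⋃ x ∈ X, {ω | ∃ R : ℕ → ℤ, IsDeltaPath δ n R ∧ R n = x ∧
        ∀ t ≤ n, ξ (R t) ω = ξ (k₁ + t) ω})
      ≤ ∑ x ∈ X, P {ω | ∃ R : ℕ → ℤ, IsDeltaPath δ n R ∧ R n = x ∧
        ∀ t ≤ n, ξ (R t) ω = ξ (k₁ + t) ω} := measure_biUnion_finset_le _ _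
  have h2 : (P (⋃ x ∈ X, {ω | ∃ R : ℕ → ℤ, IsDeltaPath δ n R ∧ R n = x ∧
        ∀ t ≤ n, ξ (R t) ω = ξ (k₁ + t) ω})).toReal
      ≤ ∑ x ∈ X, (P {ω | ∃ R : ℕ → ℤ, IsDeltaPath δ n R ∧ R n = x ∧
        ∀ t ≤ n, ξ (R t) ω = ξ (k₁ + t) ω}).toReal := by
    calc (P _).toReal ≤ (∑ x ∈ X, P {ω | ∃ R : ℕ → ℤ, IsDeltaPath δ n R ∧ R n = x ∧
          ∀ t ≤ n, ξ (R t) ω = ξ (k₁ + t) ω}).toReal := by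
          apply ENNReal.toReal_mono _ hle
          exact (ENNReal.sum_lt_top.mpr (fun x _ => measure_lt_top P _)).ne
      _ = ∑ x ∈ X, (P {ω | ∃ R : ℕ → ℤ, IsDeltaPath δ n R ∧ R n = x ∧
          ∀ t ≤ n, ξ (R t) ω = ξ (k₁ + t) ω}).toReal :=
          ENNReal.toReal_sum (fun x _ => measure_ne_top P _)
  calc (P (⋃ x ∈ X, {ω | ∃ R : ℕ → ℤ, IsDeltaPath δ n R ∧ R n = x ∧
        ∀ t ≤ n, ξ (R t) ω = ξ (k₁ + t) ω})).toReal
      ≤ ∑ x ∈ X, (P {ω | ∃ R : ℕ → ℤ, IsDeltaPath δ n R ∧ R n = x ∧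
        ∀ t ≤ n, ξ (R t) ω = ξ (k₁ + t) ω}).toReal := h2
    _ ≤ ∑ _x ∈ X, ((2:ℝ)^e / 5)^n := by
        apply Finset.sum_le_sum
        intro x hx
        exact h1 x (hXavoid x hx)
    _ = (X.card : ℝ) * ((2:ℝ)^e / 5)^n := by
        rw [Finset.sum_const, nsmul_eq_mul]
    _ ≤ (2 * (2.45:ℝ)^n) * ((2:ℝ)^e / 5)^n := by
        apply mul_le_mul_of_nonneg_right hXcard
        positivity
    _ = 2 * ((2.45:ℝ) * (2:ℝ)^e / 5)^n := by
        rw [mul_assoc, ← mul_pow]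
        congr 2
        ring
end
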